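/- Let u, v ∈ ℝ² \ {0}. Then there exist θ ∈ (0, 2π] and γ ≠ 0 such that the matrix Φ = [[cos θ, θ^{-1} sin θ],[−θ sin θ, cos θ]] satisfies Φ u = γ v. -/

import Mathlib

open scoped Matrix

/-- Any nonzero vector of `ℝ²` can be sent onto the line of any other nonzero vector by a
time-1 elliptical rotation: there exist `θ ∈ (0,2π]` and `γ ≠ 0` with
`[[cos θ, θ⁻¹ sin θ],[−θ sin θ, cos θ]] u = γ v`. -/
theorem stmt_10 (u v : Fin 2 → ℝ) (hu : u ≠ 0) (hv : v ≠ 0) :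
    ∃ θ ∈ Set.Ioc (0 : ℝ) (2 * Real.pi), ∃ γ : ℝ, γ ≠ 0 ∧
      Matrix.mulVec (!![Real.cos θ, θ⁻¹ * Real.sin θ;
          -θ * Real.sin θ, Real.cos θ] : Matrix (Fin 2) (Fin 2) ℝ) u = γ • v := by
  set f : ℝ → ℝ := fun θ =>
    (Real.cos θ * u 0 + θ⁻¹ * Real.sin θ * u 1) * v 1 -
      (-θ * Real.sin θ * u 0 + Real.cos θ * u 1) * v 0 with hf
  have hpilt : Real.pi ≤ 2 * Real.pi := by nlinarith [Real.pi_pos]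
  have hcont : ContinuousOn f (Set.uIcc Real.pi (2 * Real.pi)) := by
    have hsub : Set.uIcc Real.pi (2 * Real.pi) ⊆ {x : ℝ | x ≠ 0} := by
      intro x hx
      rw [Set.uIcc_of_le hpilt] at hx
      exact ne_of_gt (lt_of_lt_of_le Real.pi_pos hx.1)
    apply ContinuousOn.sub
    · apply ContinuousOn.mul _ continuousOn_const
      apply ContinuousOn.add
      · exact (Real.continuous_cos.continuousOn.mul continuousOn_const)
      · apply ContinuousOn.mul _ continuousOn_const
        exact (continuousOn_id.inv₀ (fun x hx => hsub hx)).mul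
          Real.continuous_sin.continuousOn
    · apply ContinuousOn.mul _ continuousOn_const
      apply ContinuousOn.add
      · exact ((continuous_neg.continuousOn (s := Set.uIcc Real.pi (2*Real.pi))).mul
          Real.continuous_sin.continuousOn).mul continuousOn_const
      · exact Real.continuous_cos.continuousOn.mul continuousOn_const
  have hfpi : f Real.pi = -(u 0 * v 1 - u 1 * v 0) := by
    simp [hf, Real.cos_pi, Real.sin_pi]; ring
  have hf2pi : f (2 * Real.pi) = u 0 * v 1 - u 1 * v 0 := by
    simp [hf, Real.cos_two_pi, Real.sin_two_pi]
  have h0 : (0 : ℝ) ∈ Set.uIcc (f Real.pi) (f (2 * Real.pi)) := by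
    rw [hfpi, hf2pi, Set.mem_uIcc]
    rcases le_total 0 (u 0 * v 1 - u 1 * v 0) with h | h
    · left; constructor <;> linarith
    · right; constructor <;> linarith
  obtain ⟨θ, hθmem, hθ0⟩ := intermediate_value_uIcc hcont h0
  rw [Set.uIcc_of_le hpilt] at hθmem
  have hθpos : 0 < θ := lt_of_lt_of_le Real.pi_pos hθmem.1
  refine ⟨θ, ⟨hθpos, hθmem.2⟩, ?_⟩
  set c := Real.cos θ
  set s := Real.sin θ
  have hcs : c ^ 2 + s ^ 2 = 1 := by
    simp [c, s, Real.cos_sq_add_sin_sq]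
  have hθinv : θ⁻¹ * θ = 1 := inv_mul_cancel₀ (ne_of_gt hθpos)
  set w0 : ℝ := c * u 0 + θ⁻¹ * s * u 1 with hw0
  set w1 : ℝ := -θ * s * u 0 + c * u 1 with hw1
  have hcross : w0 * v 1 = w1 * v 0 := by
    have : f θ = w0 * v 1 - w1 * v 0 := rfl
    rw [this] at hθ0; linarith
  have hwne : ¬ (w0 = 0 ∧ w1 = 0) := by
    rintro ⟨h0', h1'⟩
    rw [hw0] at h0'
    rw [hw1] at h1'
    apply hu
    funext i
    fin_cases i
    · show u 0 = 0
      linear_combination c * h0' - θ⁻¹ * s * h1' - u 0 * s ^ 2 * hθinv - u 0 * hcs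
    · show u 1 = 0
      linear_combination θ * s * h0' + c * h1' - u 1 * s ^ 2 * hθinv - u 1 * hcs
  have hvne : v 0 ≠ 0 ∨ v 1 ≠ 0 := by
    by_contra h
    push_neg at h
    exact hv (funext fun i => by fin_cases i <;> simp [h.1, h.2])
  have key : ∃ γ : ℝ, γ ≠ 0 ∧ w0 = γ * v 0 ∧ w1 = γ * v 1 := by
    rcases hvne with h | h
    · refine ⟨w0 / v 0, ?_, by field_simp, ?_⟩
      · intro hγ
        have hw00 : w0 = 0 := by
          field_simp at hγ; simpa using hγ
        exact hwne ⟨hw00, by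
          have := hcross
          rw [hw00] at this
          simp at this
          rcases this with h' | h'
          · exact h'
          · exact absurd h' h⟩
      · field_simp
        linarith [hcross]
    · refine ⟨w1 / v 1, ?_, ?_, by field_simp⟩
      · intro hγ
        have hw11 : w1 = 0 := by
          field_simp at hγ; simpa using hγ
        exact hwne ⟨by
          have := hcross
          rw [hw11] at this
          simp at this
          rcases this with h' | h'
          · exact h'
          · exact absurd h' h, hw11⟩
      · field_simp
        linarith [hcross]
  obtain ⟨γ, hγ, hγ0, hγ1⟩ := key
  refine ⟨γ, hγ, ?_⟩
  rw [hw0] at hγ0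
  rw [hw1] at hγ1
  funext i
  fin_cases i
  · simp [Matrix.mulVec, dotProduct, Fin.sum_univ_two, Matrix.vecHead, Matrix.vecTail]
    linear_combination hγ0
  · simp [Matrix.mulVec, dotProduct, Fin.sum_univ_two, Matrix.vecHead, Matrix.vecTail]
    linear_combination hγ1
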